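/- Let M be a Noetherian module over a ring R with the summand sum property (the sum of any two direct summands of M is again a direct summand of M). Then M is principally Goldie*-lifting if and only if M is Goldie*-lifting. -/

import Mathlib

/-- A submodule `K` is small (superfluous) in `M`:
`K + N = M` implies `N = M` for all submodules `N`. -/
def IsSmallSub {R M : Type*} [Ring R] [AddCommGroup M] [Module R M]
    (K : Submodule R M) : Prop :=
  ∀ N : Submodule R M, K ⊔ N = ⊤ → N = ⊤

/-- `K` is small in the submodule `N` (where `K ≤ N`):
for every submodule `L ≤ N`, `K + L = N` implies `L = N`. -/
def IsSmallIn {R M : Type*} [Ring R] [AddCommGroup M] [Module R M]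
    (K N : Submodule R M) : Prop :=
  ∀ L : Submodule R M, L ≤ N → K ⊔ L = N → L = N

/-- The β* relation: `X β* Y` iff `(X+Y)/X ≪ M/X` and `(X+Y)/Y ≪ M/Y`. -/
def BetaStar {R M : Type*} [Ring R] [AddCommGroup M] [Module R M]
    (X Y : Submodule R M) : Prop :=
  IsSmallSub ((X ⊔ Y).map X.mkQ) ∧ IsSmallSub ((X ⊔ Y).map Y.mkQ)

/-- A submodule is cyclic if it is generated by a single element. -/
def IsCyclicSub {R M : Type*} [Ring R] [AddCommGroup M] [Module R M]
    (X : Submodule R M) : Prop :=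
  ∃ m : M, X = Submodule.span R {m}

/-- A submodule is a direct summand if it has a complement. -/
def IsDirectSummand {R M : Type*} [Ring R] [AddCommGroup M] [Module R M]
    (D : Submodule R M) : Prop :=
  ∃ D' : Submodule R M, IsCompl D D'

/-- `M` is principally Goldie*-lifting: every cyclic submodule is β* equivalent
to a direct summand. -/
def PrinGStarLifting (R M : Type*) [Ring R] [AddCommGroup M] [Module R M] : Prop :=
  ∀ X : Submodule R M, IsCyclicSub X → ∃ D : Submodule R M, IsDirectSummand D ∧ BetaStar X D

/-- The radical of `M`: the intersection of all maximal proper submodules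
(equal to `M` if there are none). -/
def RadSub (R M : Type*) [Ring R] [AddCommGroup M] [Module R M] : Submodule R M :=
  sInf {N : Submodule R M | IsCoatom N}

section
variable {R M : Type*} [Ring R] [AddCommGroup M] [Module R M]

lemma smallSub_map_iff (X Y : Submodule R M) :
    IsSmallSub ((X ⊔ Y).map X.mkQ) ↔ ∀ N : Submodule R M, X ⊔ Y ⊔ N = ⊤ → X ⊔ N = ⊤ := by
  constructor
  · intro h N hN
    have := h (N.map X.mkQ) (by
      rw [← Submodule.map_sup, Submodule.map_mkQ_eq_top, hN, sup_top_eq])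
    rwa [Submodule.map_mkQ_eq_top] at this
  · intro h N' hN'
    set N := N'.comap X.mkQ with hNdef
    have hmap : N.map X.mkQ = N' := Submodule.map_comap_eq_self (by
      rw [Submodule.range_mkQ]; exact le_top)
    have h1 : X ⊔ Y ⊔ N = ⊤ := by
      have : (X ⊔ Y ⊔ N).map X.mkQ = ⊤ := by
        rw [Submodule.map_sup, hmap, hN']
      rw [Submodule.map_mkQ_eq_top, ← sup_assoc, ← sup_assoc, sup_idem] at this
      exact this
    have h2 := h N h1
    rw [← hmap, Submodule.map_mkQ_eq_top]
    exact h2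

lemma betaStar_iff (X Y : Submodule R M) :
    BetaStar X Y ↔ (∀ N : Submodule R M, X ⊔ Y ⊔ N = ⊤ → X ⊔ N = ⊤) ∧
      (∀ N : Submodule R M, X ⊔ Y ⊔ N = ⊤ → Y ⊔ N = ⊤) := by
  rw [BetaStar, show (X ⊔ Y).map Y.mkQ = (Y ⊔ X).map Y.mkQ by rw [sup_comm],
    smallSub_map_iff X Y, smallSub_map_iff Y X]
  constructor
  · rintro ⟨h1, h2⟩
    exact ⟨h1, fun N hN => h2 N (by rw [sup_comm Y X]; exact hN)⟩
  · rintro ⟨h1, h2⟩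
    exact ⟨h1, fun N hN => h2 N (by rw [sup_comm X Y]; exact hN)⟩

lemma betaStar_sup {X X' Y Y' : Submodule R M}
    (h : BetaStar X Y) (h' : BetaStar X' Y') : BetaStar (X ⊔ X') (Y ⊔ Y') := by
  rw [betaStar_iff] at *
  obtain ⟨hXY, hYX⟩ := h
  obtain ⟨hXY', hYX'⟩ := h'
  constructor
  · intro N hN
    have s1 : X' ⊔ Y' ⊔ (X ⊔ Y ⊔ N) = ⊤ := by
      rw [← hN]; ac_rfl
    have s2 := hXY' _ s1
    have s3 : X ⊔ Y ⊔ (X' ⊔ N) = ⊤ := by rw [← s2]; ac_rfl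
    have s4 := hXY _ s3
    rw [← s4]; ac_rfl
  · intro N hN
    have s1 : X' ⊔ Y' ⊔ (X ⊔ Y ⊔ N) = ⊤ := by
      rw [← hN]; ac_rfl
    have s2 := hYX' _ s1
    have s3 : X ⊔ Y ⊔ (Y' ⊔ N) = ⊤ := by rw [← s2]; ac_rfl
    have s4 := hYX _ s3
    rw [← s4]; ac_rfl

end

/-- A Noetherian module with the summand sum property is
principally Goldie*-lifting iff it is Goldie*-lifting. -/
theorem stmt_18 {R M : Type*} [Ring R] [AddCommGroup M] [Module R M]
    [IsNoetherian R M]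
    (hssp : ∀ D₁ D₂ : Submodule R M, IsDirectSummand D₁ → IsDirectSummand D₂ →
      IsDirectSummand (D₁ ⊔ D₂)) :
    PrinGStarLifting R M ↔
      ∀ N : Submodule R M, ∃ D : Submodule R M, IsDirectSummand D ∧ BetaStar N D := by
  constructor
  · intro h N
    refine Submodule.fg_induction
      (motive := fun N _ => ∃ D : Submodule R M, IsDirectSummand D ∧ BetaStar N D)
      (fun x => h _ ⟨x, rfl⟩) ?_ N (IsNoetherian.noetherian N)
    rintro N₁ N₂ _ _ ⟨D₁, hD₁, hb₁⟩ ⟨D₂, hD₂, hb₂⟩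
    exact ⟨D₁ ⊔ D₂, hssp _ _ hD₁ hD₂, betaStar_sup hb₁ hb₂⟩
  · intro h X _
    exact h X
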